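/- Let Ω be a finite set of size 2m. The number of graphs G with vertex set Ω such that the minimal dominating sets of G are exactly all 2-element subsets of Ω is (2m)!/(2^m m!). -/

import Mathlib

def IsDominating {V : Type*} (G : SimpleGraph V) (D : Set V) : Prop :=
  ∀ v ∉ D, ∃ u ∈ D, G.Adj u v

def IsMinDominating {V : Type*} (G : SimpleGraph V) (D : Set V) : Prop :=
  IsDominating G D ∧ ∀ D' ⊂ D, ¬ IsDominating G D'

/-- Fixed-point-free involutions on `α`. -/
abbrev FPFInv (α : Type*) := {f : α → α // ∀ v, f v ≠ v ∧ f (f v) = v}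

def FPFInv.congr {α β : Type*} (e : α ≃ β) : FPFInv α ≃ FPFInv β where
  toFun f := ⟨fun x => e (f.1 (e.symm x)), by
    intro v
    refine ⟨fun h => (f.2 (e.symm v)).1 ?_, by simp [(f.2 (e.symm v)).2]⟩
    have := congrArg e.symm h
    simpa using this⟩
  invFun f := ⟨fun x => e.symm (f.1 (e x)), by
    intro v
    refine ⟨fun h => (f.2 (e v)).1 ?_, by simp [(f.2 (e v)).2]⟩
    have := congrArg e h
    simpa using this⟩
  left_inv f := by ext x; simp
  right_inv f := by ext x; simp

lemma card_ne_ne {α : Type*} [Fintype α] [DecidableEq α] {a b : α} (h : a ≠ b) :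
    Fintype.card {x : α // x ≠ a ∧ x ≠ b} = Fintype.card α - 2 := by
  have e : {x : α // x ≠ a ∧ x ≠ b} ≃ {x : α // ¬ x ∈ ({a, b} : Finset α)} :=
    Equiv.subtypeEquivRight (by simp [not_or])
  rw [Fintype.card_congr e, Fintype.card_subtype_compl]
  congr 1
  rw [Fintype.card_coe, Finset.card_pair h]

section Step

variable {n : ℕ} (w : Fin (n + 1))

/-- Extend an involution on the complement of a pair to all of `Fin (n+2)`. -/
def extFun (g : FPFInv {x : Fin (n + 2) // x ≠ Fin.last (n + 1) ∧ x ≠ w.castSucc}) :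
    Fin (n + 2) → Fin (n + 2) := fun x =>
  if hL : x = Fin.last (n + 1) then w.castSucc
  else if hb : x = w.castSucc then Fin.last (n + 1)
  else (g.1 ⟨x, hL, hb⟩).1

lemma cne : w.castSucc ≠ Fin.last (n + 1) := (Fin.castSucc_lt_last w).ne

lemma extFun_L (g) : extFun w g (Fin.last (n + 1)) = w.castSucc := by
  simp [extFun]

lemma extFun_b (g) : extFun w g w.castSucc = Fin.last (n + 1) := by
  simp [extFun, cne w]

lemma extFun_else (g) (x : Fin (n + 2)) (hL : x ≠ Fin.last (n + 1)) (hb : x ≠ w.castSucc) :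
    extFun w g x = (g.1 ⟨x, hL, hb⟩).1 := by
  simp [extFun, hL, hb]

lemma extFun_prop (g) : ∀ v, extFun w g v ≠ v ∧ extFun w g (extFun w g v) = v := by
  intro v
  by_cases hL : v = Fin.last (n + 1)
  · subst hL
    rw [extFun_L]
    exact ⟨cne w, by rw [extFun_b]⟩
  · by_cases hb : v = w.castSucc
    · subst hb
      rw [extFun_b]
      exact ⟨(cne w).symm, by rw [extFun_L]⟩
    · rw [extFun_else w g v hL hb]
      set y : {x : Fin (n + 2) // x ≠ Fin.last (n + 1) ∧ x ≠ w.castSucc} := ⟨v, hL, hb⟩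
      have h1 : (g.1 y).1 ≠ v := fun h => (g.2 y).1 (Subtype.ext h)
      refine ⟨h1, ?_⟩
      rw [extFun_else w g _ (g.1 y).2.1 (g.1 y).2.2]
      have : (⟨(g.1 y).1, (g.1 y).2.1, (g.1 y).2.2⟩ :
          {x : Fin (n + 2) // x ≠ Fin.last (n + 1) ∧ x ≠ w.castSucc}) = g.1 y :=
        Subtype.ext rfl
      rw [this]
      exact congrArg Subtype.val (g.2 y).2

/-- restriction of an involution with `f (last) = w.castSucc` to the complement of the pair -/
def restrictFun (f : FPFInv (Fin (n + 2))) (hw : f.1 (Fin.last (n + 1)) = w.castSucc)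
    (x : {x : Fin (n + 2) // x ≠ Fin.last (n + 1) ∧ x ≠ w.castSucc}) :
    {x : Fin (n + 2) // x ≠ Fin.last (n + 1) ∧ x ≠ w.castSucc} := by
  refine ⟨f.1 x.1, fun h => x.2.2 ?_, fun h => x.2.1 ?_⟩
  · have h2 := congrArg f.1 h
    rw [(f.2 x.1).2, hw] at h2
    exact h2
  · -- f x = b = f last → x = last
    have : f.1 (f.1 x.1) = f.1 (f.1 (Fin.last (n+1))) := by rw [h, hw]
    rwa [(f.2 _).2, (f.2 _).2] at this

def fiberEquiv :
    {f : FPFInv (Fin (n + 2)) // f.1 (Fin.last (n + 1)) = w.castSucc} ≃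
      FPFInv {x : Fin (n + 2) // x ≠ Fin.last (n + 1) ∧ x ≠ w.castSucc} where
  toFun f := ⟨restrictFun w f.1 f.2, by
    intro y
    constructor
    · exact fun h => (f.1.2 y.1).1 (congrArg Subtype.val h)
    · exact Subtype.ext (f.1.2 y.1).2⟩
  invFun g := ⟨⟨extFun w g, extFun_prop w g⟩, extFun_L w g⟩
  left_inv f := by
    apply Subtype.ext
    apply Subtype.ext
    funext x
    show extFun w _ x = f.1.1 x
    by_cases hL : x = Fin.last (n + 1)
    · subst hL; rw [extFun_L, f.2]
    · by_cases hb : x = w.castSucc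
      · subst hb
        rw [extFun_b]
        have h2 := congrArg f.1.1 f.2
        rw [(f.1.2 _).2] at h2
        exact h2
      · rw [extFun_else _ _ x hL hb]
        rfl
  right_inv g := by
    apply Subtype.ext
    funext y
    apply Subtype.ext
    show extFun w g y.1 = (g.1 y).1
    rw [extFun_else w g y.1 y.2.1 y.2.2]

lemma card_step (n : ℕ) :
    Fintype.card (FPFInv (Fin (n + 2))) = (n + 1) * Fintype.card (FPFInv (Fin n)) := by
  classical
  let proj : FPFInv (Fin (n + 2)) → Fin (n + 1) :=
    fun f => (f.1 (Fin.last (n + 1))).castPred (f.2 (Fin.last (n + 1))).1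
  rw [← Fintype.card_congr (Equiv.sigmaFiberEquiv proj), Fintype.card_sigma]
  have hfib : ∀ w : Fin (n + 1),
      Fintype.card {f // proj f = w} = Fintype.card (FPFInv (Fin n)) := by
    intro w
    have e1 : {f // proj f = w} ≃
        {f : FPFInv (Fin (n + 2)) // f.1 (Fin.last (n + 1)) = w.castSucc} :=
      Equiv.subtypeEquivRight (fun f => by
        rw [Fin.ext_iff, Fin.ext_iff]
        simp [proj])
    rw [Fintype.card_congr (e1.trans (fiberEquiv w))]
    have hc : Fintype.card {x : Fin (n + 2) // x ≠ Fin.last (n + 1) ∧ x ≠ w.castSucc} = n := by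
      rw [card_ne_ne (Ne.symm (cne w))]
      simp
    exact Fintype.card_congr (FPFInv.congr (Fintype.equivFinOfCardEq hc))
  simp [hfib, Finset.sum_const, Fintype.card_fin, mul_comm]

end Step

lemma card_fpf (m : ℕ) :
    Fintype.card (FPFInv (Fin (2 * m))) = Nat.doubleFactorial (2 * m - 1) := by
  induction m with
  | zero => decide
  | succ m ih =>
    have h2 : 2 * (m + 1) = 2 * m + 2 := by ring
    rw [h2, card_step, ih, show 2 * m + 2 - 1 = 2 * m + 1 by omega,
      Nat.doubleFactorial_add_one]

lemma card_fpf' (m : ℕ) (hm : 1 ≤ m) :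
    Fintype.card (FPFInv (Fin (2 * m))) = (2 * m).factorial / (2 ^ m * m.factorial) := by
  rw [card_fpf]
  obtain ⟨k, rfl⟩ : ∃ k, m = k + 1 := ⟨m - 1, by omega⟩
  have h1 : 2 * (k + 1) = (2 * k + 1) + 1 := by ring
  rw [h1, Nat.factorial_eq_mul_doubleFactorial]
  have h2 : Nat.doubleFactorial (2 * k + 1 + 1) = 2 ^ (k + 1) * (k + 1).factorial := by
    have := Nat.doubleFactorial_two_mul (k + 1)
    rwa [show 2 * (k + 1) = 2 * k + 1 + 1 by ring] at this
  rw [h2, Nat.mul_div_cancel_left _ (by positivity)]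
  norm_num

section Graphs

variable {V : Type*}

def toGraph (f : FPFInv V) : SimpleGraph V where
  Adj u v := u ≠ v ∧ f.1 u ≠ v
  symm := ⟨by
    rintro u v ⟨h1, h2⟩
    refine ⟨h1.symm, fun h => h2 ?_⟩
    rw [← h, (f.2 v).2]⟩
  loopless := ⟨fun v => by simp⟩

lemma toGraph_adj (f : FPFInv V) (u v : V) :
    (toGraph f).Adj u v ↔ u ≠ v ∧ f.1 u ≠ v := Iff.rfl

lemma not_adj_partner (f : FPFInv V) (v : V) : ¬ (toGraph f).Adj v (f.1 v) :=
  fun h => h.2 rfl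

lemma dom_pair (f : FPFInv V) {a b : V} (hab : a ≠ b) :
    IsDominating (toGraph f) {a, b} := by
  intro v hv
  simp only [Set.mem_insert_iff, Set.mem_singleton_iff, not_or] at hv
  by_cases ha : f.1 a = v
  · refine ⟨b, Or.inr rfl, Ne.symm hv.2, fun hb => hab ?_⟩
    rw [← (f.2 a).2, ha, ← hb, (f.2 b).2]
  · exact ⟨a, Or.inl rfl, Ne.symm hv.1, ha⟩

lemma not_dom_singleton (f : FPFInv V) (a : V) :
    ¬ IsDominating (toGraph f) {a} := by
  intro h
  obtain ⟨u, hu, hadj⟩ := h (f.1 a) (by simp [(f.2 a).1])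
  rw [Set.mem_singleton_iff] at hu
  subst hu
  exact hadj.2 rfl

lemma not_dom_empty [Nonempty V] (G : SimpleGraph V) : ¬ IsDominating G ∅ := by
  intro h
  obtain ⟨u, hu, -⟩ := h (Classical.arbitrary V) (Set.notMem_empty _)
  exact hu

lemma minDom_toGraph [Nonempty V] (f : FPFInv V) :
    {D : Set V | IsMinDominating (toGraph f) D} = {A : Set V | A.ncard = 2} := by
  ext D
  simp only [Set.mem_setOf_eq]
  constructor
  · rintro ⟨hdom, hmin⟩
    obtain ⟨a, ha⟩ : D.Nonempty := by
      rw [Set.nonempty_iff_ne_empty]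
      rintro rfl
      exact not_dom_empty _ hdom
    obtain ⟨b, hb, hba⟩ : ∃ b ∈ D, b ≠ a := by
      by_contra h
      push_neg at h
      have hDa : D = {a} := Set.eq_singleton_iff_unique_mem.2 ⟨ha, h⟩
      exact not_dom_singleton f a (hDa ▸ hdom)
    have hsub : {a, b} ⊆ D := by
      rintro x (rfl | rfl)
      exacts [ha, hb]
    have hD : D = {a, b} := by
      by_contra h
      exact hmin {a, b} (hsub.ssubset_of_ne fun e => h e.symm) (dom_pair f hba.symm)
    rw [hD, Set.ncard_pair hba.symm]
  · intro hD
    obtain ⟨a, b, hab, rfl⟩ := Set.ncard_eq_two.1 hD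
    refine ⟨dom_pair f hab, ?_⟩
    intro D' hD' hdom'
    have hsub := hD'.subset
    by_cases haD : a ∈ D' <;> by_cases hbD : b ∈ D'
    · refine hD'.ne (Set.Subset.antisymm hsub ?_)
      rintro x (rfl | rfl) <;> assumption
    · have : D' = {a} := by
        refine Set.eq_singleton_iff_unique_mem.2 ⟨haD, fun x hx => ?_⟩
        rcases hsub hx with rfl | rfl
        · rfl
        · exact absurd hx hbD
      exact not_dom_singleton f a (this ▸ hdom')
    · have : D' = {b} := by
        refine Set.eq_singleton_iff_unique_mem.2 ⟨hbD, fun x hx => ?_⟩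
        rcases hsub hx with rfl | rfl
        · exact absurd hx haD
        · rfl
      exact not_dom_singleton f b (this ▸ hdom')
    · have : D' = ∅ := by
        refine Set.eq_empty_iff_forall_notMem.2 fun x hx => ?_
        rcases hsub hx with rfl | rfl
        exacts [haD hx, hbD hx]
      have : Nonempty V := ⟨a⟩
      rename_i hempty
      exact not_dom_empty (toGraph f) (hempty ▸ hdom')

lemma exists_fpf [Nonempty V] {G : SimpleGraph V}
    (hG : {D : Set V | IsMinDominating G D} = {A : Set V | A.ncard = 2}) :
    ∃ f : FPFInv V, G = toGraph f := by
  classical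
  have hset := Set.ext_iff.1 hG
  have hsing : ∀ v : V, ¬ IsDominating G {v} := by
    intro v hv
    have hmin : IsMinDominating G {v} := by
      refine ⟨hv, fun D' hD' hdom' => ?_⟩
      rw [Set.ssubset_singleton_iff.1 hD'] at hdom'
      exact not_dom_empty G hdom'
    have := (hset {v}).1 hmin
    simp at this
  have hex : ∀ v : V, ∃ w, w ≠ v ∧ ¬ G.Adj v w := by
    intro v
    by_contra h
    push_neg at h
    refine hsing v fun x hx => ⟨v, rfl, ?_⟩
    rw [Set.mem_singleton_iff] at hx
    exact h x hx
  have huniq : ∀ v w w', w ≠ v → ¬ G.Adj v w → w' ≠ v → ¬ G.Adj v w' → w = w' := by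
    intro v w w' hw hnw hw' hnw'
    by_contra hne
    have hmin := (hset {w, w'}).2 (Set.ncard_pair hne)
    obtain ⟨u, hu, hadj⟩ := hmin.1 v (by simp [Ne.symm hw, Ne.symm hw', not_or])
    rcases hu with rfl | rfl
    · exact hnw hadj.symm
    · exact hnw' hadj.symm
  choose f hf1 hf2 using hex
  have hinv : ∀ v, f (f v) = v :=
    fun v => huniq (f v) (f (f v)) v (hf1 _) (hf2 _) (Ne.symm (hf1 v))
      (fun h => hf2 v h.symm)
  refine ⟨⟨f, fun v => ⟨hf1 v, hinv v⟩⟩, ?_⟩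
  ext u v
  rw [toGraph_adj]
  constructor
  · intro h
    refine ⟨h.ne, fun he => hf2 u ?_⟩
    have he' : f u = v := he
    rwa [he']
  · rintro ⟨huv, hfuv⟩
    by_contra hnadj
    exact hfuv (huniq u (f u) v (hf1 u) (hf2 u) (Ne.symm huv) hnadj)

end Graphs

/-- If `|Ω| = 2m`, the number of graphs on `Ω` whose minimal dominating sets are exactly
all 2-element subsets of `Ω` is `(2m)!/(2^m·m!)`. -/
theorem card_graphs_minDominating_eq_pairs {V : Type*} [Fintype V]
    (m : ℕ) (hm : 1 ≤ m) (hcard : Fintype.card V = 2 * m) :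
    {G : SimpleGraph V |
        {D : Set V | IsMinDominating G D} = {A : Set V | A.ncard = 2}}.ncard
      = (2 * m).factorial / (2 ^ m * m.factorial) := by
  classical
  have hne : Nonempty V := Fintype.card_pos_iff.mp (by omega)
  have hbij : Function.Bijective
      (fun f : FPFInv V => (⟨toGraph f, minDom_toGraph f⟩ :
        {G : SimpleGraph V //
          {D : Set V | IsMinDominating G D} = {A : Set V | A.ncard = 2}})) := by
    constructor
    · intro f g hfg
      have hadj : toGraph f = toGraph g := congrArg Subtype.val hfg
      apply Subtype.ext
      funext v
      have h1 : ¬ (toGraph f).Adj v (g.1 v) := hadj ▸ not_adj_partner g v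
      by_contra hne'
      exact h1 ⟨Ne.symm (g.2 v).1, hne'⟩
    · rintro ⟨G, hG⟩
      obtain ⟨f, rfl⟩ := exists_fpf hG
      exact ⟨f, rfl⟩
  have h1 : Nat.card (FPFInv V) = Nat.card {G : SimpleGraph V //
      {D : Set V | IsMinDominating G D} = {A : Set V | A.ncard = 2}} :=
    Nat.card_congr (Equiv.ofBijective _ hbij)
  have h2 : Nat.card (FPFInv V) = (2 * m).factorial / (2 ^ m * m.factorial) := by
    rw [Nat.card_congr (FPFInv.congr (Fintype.equivFinOfCardEq hcard)),
      Nat.card_eq_fintype_card, card_fpf' m hm]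
  exact ((Nat.card_coe_set_eq _).symm).trans (h1.symm.trans h2)
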